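/- Closed-form completion for convex quadratic objective: for Q = FᵀF positive definite (F invertible), fix ŷ ∈ K* and set ẑ = F^{-T}(c − Aᵀŷ), ẑ₀ = ½‖ẑ‖₂². Then Aᵀŷ + Fᵀẑ = c and (1, ẑ₀, ẑ) lies in the rotated second-order cone {(a, b, v) : 2ab ≥ ‖v‖², a, b ≥ 0}, and among all feasible completions with fixed ŷ, this choice maximizes bᵀŷ − z₀. -/
import Mathlib


open Matrix

/-- Closed-form dual completion for a convex quadratic objective: with `Q = FᵀF`
positive definite (`F` invertible), fixing `yh ∈ K*` and setting
`zh = F⁻ᵀ(c − Aᵀyh)`, `zh₀ = ½‖zh‖²`, one has `Aᵀyh + Fᵀzh = c`, the triple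
`(1, zh₀, zh)` lies in the rotated second-order cone `{(a,b,v) : 2ab ≥ ‖v‖², a,b ≥ 0}`,
and this choice maximizes `bᵀyh − z₀` among all feasible completions with fixed `yh`. -/
theorem quadratic_objective_completion {m n : ℕ}
    (K : Set (Fin m → ℝ))
    (A : Matrix (Fin m) (Fin n) ℝ) (b : Fin m → ℝ) (c : Fin n → ℝ)
    (F : Matrix (Fin n) (Fin n) ℝ) (hF : IsUnit F.det)
    (yh : Fin m → ℝ) (hyK : ∀ v ∈ K, 0 ≤ yh ⬝ᵥ v)
    (zh : Fin n → ℝ) (zh0 : ℝ)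
    (hzh : zh = (F.transpose)⁻¹.mulVec (c - A.transpose.mulVec yh))
    (hzh0 : zh0 = (1 / 2) * (zh ⬝ᵥ zh)) :
    (A.transpose.mulVec yh + F.transpose.mulVec zh = c ∧
      (zh ⬝ᵥ zh ≤ 2 * 1 * zh0 ∧ (0:ℝ) ≤ 1 ∧ 0 ≤ zh0)) ∧
    (∀ (z : Fin n → ℝ) (z0 : ℝ),
      A.transpose.mulVec yh + F.transpose.mulVec z = c →
      z ⬝ᵥ z ≤ 2 * 1 * z0 → 0 ≤ z0 →
      b ⬝ᵥ yh - z0 ≤ b ⬝ᵥ yh - zh0) := by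
  have hFt : IsUnit F.transpose.det := by rwa [Matrix.det_transpose]
  have hfeas : F.transpose.mulVec zh = c - A.transpose.mulVec yh := by
    rw [hzh, Matrix.mulVec_mulVec, Matrix.mul_nonsing_inv _ hFt, Matrix.one_mulVec]
  have hnn : 0 ≤ zh ⬝ᵥ zh := by
    have := Finset.sum_nonneg (fun i (_ : i ∈ Finset.univ) => mul_self_nonneg (zh i))
    simpa [dotProduct] using this
  refine ⟨⟨?_, ?_, zero_le_one, ?_⟩, ?_⟩
  · rw [hfeas]; abel
  · rw [hzh0]; linarith
  · rw [hzh0]; linarith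
  intro z z0 hz hz1 hz2
  have hzeq : z = zh := by
    have h1 : F.transpose.mulVec z = c - A.transpose.mulVec yh := by
      rw [← hz]; abel
    have := congrArg ((F.transpose)⁻¹.mulVec) h1
    rwa [Matrix.mulVec_mulVec, Matrix.nonsing_inv_mul _ hFt, Matrix.one_mulVec, ← hzh] at this
  subst hzeq
  have : zh0 ≤ z0 := by rw [hzh0]; linarith
  linarith
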